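/- arXiv:2010.04703 — 3 statements merged into one kernel-verified Lean document; each statement's English description precedes it below -/
import Mathlib

section
/- In the dyadic setup, fix positive integers N, M and set T = N + M + NM. Order the random vectors as Z_t = N^{-1} s̄c_t for t = 1,…,N; Z_{N+j} = M^{-1} s̄p_j for j = 1,…,M; and Z_{N+M+(i−1)M+j} = (NM)^{-1}(s_{ij} − s̄_{ij}) for i = 1,…,N, j = 1,…,M. Then (Z_t)_{t=1}^T is a martingale difference sequence with respect to its natural filtration: for every t = 1,…,T, E[Z_t | σ(Z_1,…,Z_{t−1})] = 0 almost surely. -/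
open MeasureTheory ProbabilityTheory Filter
open scoped BigOperators NNReal Topology

namespace SparseNet

/-- Index type for the three independent families of the dyadic setup:
consumer draws `(W_i, A_i)`, product draws `(X_j, B_j)` and idiosyncratic
draws `V_{ij}`. -/
abbrev Idx : Type := ℕ ⊕ ℕ ⊕ (ℕ × ℕ)

/-- Codomain of each member of the combined family. -/
def idxType (𝒲 𝒜 𝒳 ℬ 𝒱 : Type) : Idx → Type
  | Sum.inl _ => 𝒲 × 𝒜
  | Sum.inr (Sum.inl _) => 𝒳 × ℬ
  | Sum.inr (Sum.inr _) => 𝒱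

/-- Measurable-space structure on the codomains. -/
def idxMS {𝒲 𝒜 𝒳 ℬ 𝒱 : Type} [MeasurableSpace 𝒲] [MeasurableSpace 𝒜]
    [MeasurableSpace 𝒳] [MeasurableSpace ℬ] [MeasurableSpace 𝒱] :
    ∀ t : Idx, MeasurableSpace (idxType 𝒲 𝒜 𝒳 ℬ 𝒱 t)
  | Sum.inl _ => inferInstanceAs (MeasurableSpace (𝒲 × 𝒜))
  | Sum.inr (Sum.inl _) => inferInstanceAs (MeasurableSpace (𝒳 × ℬ))
  | Sum.inr (Sum.inr _) => inferInstanceAs (MeasurableSpace 𝒱)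

/-- The combined family of random elements. -/
def fam {Ω 𝒲 𝒜 𝒳 ℬ 𝒱 : Type} (W : ℕ → Ω → 𝒲) (A : ℕ → Ω → 𝒜) (X : ℕ → Ω → 𝒳)
    (B : ℕ → Ω → ℬ) (V : ℕ → ℕ → Ω → 𝒱) :
    ∀ t : Idx, Ω → idxType 𝒲 𝒜 𝒳 ℬ 𝒱 t
  | Sum.inl i => fun ω => (W i ω, A i ω)
  | Sum.inr (Sum.inl j) => fun ω => (X j ω, B j ω)
  | Sum.inr (Sum.inr ij) => V ij.1 ij.2

variable {Ω 𝒲 𝒜 𝒳 ℬ 𝒱 : Type} [MeasurableSpace Ω] [MeasurableSpace 𝒲]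
  [MeasurableSpace 𝒜] [MeasurableSpace 𝒳] [MeasurableSpace ℬ] [MeasurableSpace 𝒱]

/-- The dyadic setup: `(W_i, A_i)_{i≥1}` i.i.d., `(X_j, B_j)_{j≥1}` i.i.d.,
`(V_{ij})_{i,j≥1}` i.i.d., the three families mutually independent. -/
structure DyadicSetup (μ : Measure Ω) (W : ℕ → Ω → 𝒲) (A : ℕ → Ω → 𝒜)
    (X : ℕ → Ω → 𝒳) (B : ℕ → Ω → ℬ) (V : ℕ → ℕ → Ω → 𝒱) : Prop where
  measW : ∀ i, Measurable (W i)
  measA : ∀ i, Measurable (A i)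
  measX : ∀ j, Measurable (X j)
  measB : ∀ j, Measurable (B j)
  measV : ∀ i j, Measurable (V i j)
  indep : iIndepFun (m := idxMS) (fam W A X B V) μ
  identWA : ∀ i, IdentDistrib (fun ω => (W i ω, A i ω)) (fun ω => (W 1 ω, A 1 ω)) μ μ
  identXB : ∀ j, IdentDistrib (fun ω => (X j ω, B j ω)) (fun ω => (X 1 ω, B 1 ω)) μ μ
  identV : ∀ i j, IdentDistrib (V i j) (V 1 1) μ μ

variable (μ : Measure Ω) {d : ℕ}

/-- The score `s_{ij} = g(W_i, X_j, A_i, B_j, V_{ij})`. -/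
def score (g : 𝒲 → 𝒳 → 𝒜 → ℬ → 𝒱 → (Fin d → ℝ)) (W : ℕ → Ω → 𝒲) (A : ℕ → Ω → 𝒜)
    (X : ℕ → Ω → 𝒳) (B : ℕ → Ω → ℬ) (V : ℕ → ℕ → Ω → 𝒱) (i j : ℕ) :
    Ω → Fin d → ℝ :=
  fun ω => g (W i ω) (X j ω) (A i ω) (B j ω) (V i j ω)

/-- `s̄_{ij} = E[s_{ij} | W_i, X_j, A_i, B_j]`. -/
noncomputable def sbar (g : 𝒲 → 𝒳 → 𝒜 → ℬ → 𝒱 → (Fin d → ℝ)) (W : ℕ → Ω → 𝒲)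
    (A : ℕ → Ω → 𝒜) (X : ℕ → Ω → 𝒳) (B : ℕ → Ω → ℬ) (V : ℕ → ℕ → Ω → 𝒱)
    (i j : ℕ) : Ω → Fin d → ℝ :=
  μ[score g W A X B V i j |
    MeasurableSpace.comap (fun ω => (W i ω, X j ω, A i ω, B j ω)) inferInstance]

/-- `s̄c_i = E[s̄_{i1} | W_i, A_i]`. -/
noncomputable def sbarc (g : 𝒲 → 𝒳 → 𝒜 → ℬ → 𝒱 → (Fin d → ℝ)) (W : ℕ → Ω → 𝒲)
    (A : ℕ → Ω → 𝒜) (X : ℕ → Ω → 𝒳) (B : ℕ → Ω → ℬ) (V : ℕ → ℕ → Ω → 𝒱)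
    (i : ℕ) : Ω → Fin d → ℝ :=
  μ[sbar μ g W A X B V i 1 |
    MeasurableSpace.comap (fun ω => (W i ω, A i ω)) inferInstance]

/-- `s̄p_j = E[s̄_{1j} | X_j, B_j]`. -/
noncomputable def sbarp (g : 𝒲 → 𝒳 → 𝒜 → ℬ → 𝒱 → (Fin d → ℝ)) (W : ℕ → Ω → 𝒲)
    (A : ℕ → Ω → 𝒜) (X : ℕ → Ω → 𝒳) (B : ℕ → Ω → ℬ) (V : ℕ → ℕ → Ω → 𝒱)
    (j : ℕ) : Ω → Fin d → ℝ :=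
  μ[sbar μ g W A X B V 1 j |
    MeasurableSpace.comap (fun ω => (X j ω, B j ω)) inferInstance]

/-- The (cross-)covariance matrix `E[f h']` of two mean-zero random vectors. -/
noncomputable def covMat (f h : Ω → Fin d → ℝ) : Matrix (Fin d) (Fin d) ℝ :=
  Matrix.of fun a b => ∫ ω, f ω a * h ω b ∂μ

/-- The ordered triangular collection:
`Z_t = N⁻¹ s̄c_t` for `t = 1,…,N`; `Z_{N+j} = M⁻¹ s̄p_j` for `j = 1,…,M`;
`Z_{N+M+(i−1)M+j} = (NM)⁻¹ (s_{ij} − s̄_{ij})` for `i = 1,…,N`, `j = 1,…,M`. -/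
noncomputable def Zmds (g : 𝒲 → 𝒳 → 𝒜 → ℬ → 𝒱 → (Fin d → ℝ)) (W : ℕ → Ω → 𝒲)
    (A : ℕ → Ω → 𝒜) (X : ℕ → Ω → 𝒳) (B : ℕ → Ω → ℬ) (V : ℕ → ℕ → Ω → 𝒱)
    (N M t : ℕ) : Ω → Fin d → ℝ :=
  if t ≤ N then fun ω => (N : ℝ)⁻¹ • sbarc μ g W A X B V t ω
  else if t ≤ N + M then fun ω => (M : ℝ)⁻¹ • sbarp μ g W A X B V (t - N) ω
  else fun ω => ((N : ℝ) * M)⁻¹ •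
    (score g W A X B V ((t - N - M - 1) / M + 1) ((t - N - M - 1) % M + 1) ω -
      sbar μ g W A X B V ((t - N - M - 1) / M + 1) ((t - N - M - 1) % M + 1) ω)

/-- The natural filtration `σ(Z_1, …, Z_t)`. -/
noncomputable def natFilt (g : 𝒲 → 𝒳 → 𝒜 → ℬ → 𝒱 → (Fin d → ℝ)) (W : ℕ → Ω → 𝒲)
    (A : ℕ → Ω → 𝒜) (X : ℕ → Ω → 𝒳) (B : ℕ → Ω → ℬ) (V : ℕ → ℕ → Ω → 𝒱)
    (N M t : ℕ) : MeasurableSpace Ω :=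
  ⨆ r ∈ Finset.Icc 1 t, MeasurableSpace.comap (Zmds μ g W A X B V N M r) inferInstance


section AuxLemmas

lemma eval_integral' {Ω' : Type} [MeasurableSpace Ω'] {d : ℕ} {ν : Measure Ω'}
    {f : Ω' → Fin d → ℝ} (hf : Integrable f ν) (a : Fin d) :
    (∫ ω, f ω ∂ν) a = ∫ ω, f ω a ∂ν := by
  have := (ContinuousLinearMap.proj (R := ℝ) (φ := fun _ : Fin d => ℝ) a).integral_comp_comm hf
  simpa using this.symm

/-- If `f` is `m₁'`-strongly measurable, `m₁ ≤ m₁'` and `m₁'` is independent of `m₂`, then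
conditioning on `m₁ ⊔ m₂` is the same as conditioning on `m₁`. -/
theorem condexp_sup_indep' {Ω' : Type} {m₁ m₁' m₂ : MeasurableSpace Ω'} [m0 : MeasurableSpace Ω']
    {μ' : Measure Ω'} [IsProbabilityMeasure μ'] {d : ℕ}
    (hm₁' : m₁' ≤ m0) (hm₂ : m₂ ≤ m0) (hm₁ : m₁ ≤ m₁')
    {f : Ω' → Fin d → ℝ} (hf : Integrable f μ') (hfm : StronglyMeasurable[m₁'] f)
    (hindep : Indep m₁' m₂ μ') :
    μ'[f | m₁ ⊔ m₂] =ᵐ[μ'] μ'[f | m₁] := by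
  have hm₁0 : m₁ ≤ m0 := hm₁.trans hm₁'
  have hm12 : m₁ ⊔ m₂ ≤ m0 := sup_le hm₁0 hm₂
  set 𝒮 : Set (Set Ω') :=
    {s | ∃ s₁ s₂, MeasurableSet[m₁] s₁ ∧ MeasurableSet[m₂] s₂ ∧ s = s₁ ∩ s₂} with h𝒮
  have h_eq : m₁ ⊔ m₂ = MeasurableSpace.generateFrom 𝒮 := by
    refine le_antisymm (sup_le ?_ ?_) (MeasurableSpace.generateFrom_le ?_)
    · exact fun s hs => MeasurableSpace.measurableSet_generateFrom
        ⟨s, Set.univ, hs, MeasurableSet.univ, (Set.inter_univ s).symm⟩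
    · exact fun s hs => MeasurableSpace.measurableSet_generateFrom
        ⟨Set.univ, s, MeasurableSet.univ, hs, (Set.univ_inter s).symm⟩
    · rintro s ⟨s₁, s₂, h₁, h₂, rfl⟩
      exact ((le_sup_left : m₁ ≤ m₁ ⊔ m₂) _ h₁).inter ((le_sup_right : m₂ ≤ m₁ ⊔ m₂) _ h₂)
  have h_pi : IsPiSystem 𝒮 := by
    rintro s ⟨s₁, s₂, h₁, h₂, rfl⟩ t ⟨t₁, t₂, g₁, g₂, rfl⟩ -
    exact ⟨s₁ ∩ t₁, s₂ ∩ t₂, h₁.inter g₁, h₂.inter g₂, by rw [Set.inter_inter_inter_comm]⟩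
  have key : ∀ (h : Ω' → Fin d → ℝ), Integrable h μ' → StronglyMeasurable[m₁'] h →
      ∀ s₁ s₂, MeasurableSet[m₁] s₁ → MeasurableSet[m₂] s₂ → ∀ a : Fin d,
      ∫ x in s₁ ∩ s₂, h x a ∂μ' =
        (∫ x, s₂.indicator (fun _ => (1 : ℝ)) x ∂μ') * ∫ x in s₁, h x a ∂μ' := by
    intro h hint hmeas s₁ s₂ h₁ h₂ a
    have hs₁0 : MeasurableSet s₁ := hm₁0 _ h₁
    have hs₂0 : MeasurableSet s₂ := hm₂ _ h₂
    have hXm : Measurable[m₂] (s₂.indicator (fun _ => (1 : ℝ))) :=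
      measurable_const.indicator h₂
    have hYm : Measurable[m₁'] (s₁.indicator fun x => h x a) :=
      ((measurable_pi_apply a).comp hmeas.measurable).indicator (hm₁ _ h₁)
    have hXY : IndepFun (s₂.indicator (fun _ => (1 : ℝ))) (s₁.indicator fun x => h x a) μ' :=
      indep_of_indep_of_le_right
        (indep_of_indep_of_le_left hindep.symm
          (measurable_iff_comap_le.mp hXm)) (measurable_iff_comap_le.mp hYm)
    have heq : (s₁ ∩ s₂).indicator (fun x => h x a) =
        fun x => s₂.indicator (fun _ => (1 : ℝ)) x * s₁.indicator (fun x => h x a) x := by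
      funext x
      by_cases hx₁ : x ∈ s₁ <;> by_cases hx₂ : x ∈ s₂ <;>
        simp [Set.indicator, hx₁, hx₂]
    rw [← integral_indicator (hs₁0.inter hs₂0), heq,
      hXY.integral_fun_mul_eq_mul_integral ((hXm.mono hm₂ le_rfl).aestronglyMeasurable)
        ((hYm.mono hm₁' le_rfl).aestronglyMeasurable),
      integral_indicator hs₁0]
  refine (ae_eq_condExp_of_forall_setIntegral_eq hm12 hf
    (fun s _ _ => integrable_condExp.integrableOn) (fun s hs _ => ?_)
    ((stronglyMeasurable_condExp.mono (le_sup_left (b := m₂))).aestronglyMeasurable)).symm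
  revert hs
  refine fun hs => MeasurableSpace.induction_on_inter (m := m₁ ⊔ m₂) (C := fun s _ =>
    ∫ x in s, (μ'[f|m₁]) x ∂μ' = ∫ x in s, f x ∂μ') h_eq h_pi (by simp) ?_ ?_ ?_ _ hs
  · rintro t ⟨s₁, s₂, h₁, h₂, rfl⟩
    funext a
    rw [eval_integral' (hf.integrableOn) a, eval_integral' (integrable_condExp.integrableOn) a,
      key _ integrable_condExp (stronglyMeasurable_condExp.mono hm₁) s₁ s₂ h₁ h₂ a,
      key _ hf hfm s₁ s₂ h₁ h₂ a,
      ← eval_integral' (hf.integrableOn) a, ← eval_integral' (integrable_condExp.integrableOn) a,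
      setIntegral_condExp hm₁0 hf h₁]
  · intro t htm ht
    rw [setIntegral_compl (hm12 _ htm) integrable_condExp,
      setIntegral_compl (hm12 _ htm) hf, ht, integral_condExp hm₁0]
  · intro g' hdisj hgm hg
    rw [integral_iUnion (fun i => hm12 _ (hgm i)) hdisj integrable_condExp.integrableOn,
      integral_iUnion (fun i => hm12 _ (hgm i)) hdisj hf.integrableOn]
    exact tsum_congr hg

end AuxLemmas

set_option maxHeartbeats 2000000 in
/-- the ordered collection `(Z_t)_{t=1}^{N+M+NM}` is a martingale
difference sequence with respect to its natural filtration: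
`E[Z_t | σ(Z_1,…,Z_{t−1})] = 0` a.s. for every `t = 1,…,N+M+NM`. -/
theorem statement5
    (hμ : IsProbabilityMeasure μ)
    (W : ℕ → Ω → 𝒲) (A : ℕ → Ω → 𝒜) (X : ℕ → Ω → 𝒳) (B : ℕ → Ω → ℬ)
    (V : ℕ → ℕ → Ω → 𝒱)
    (hsetup : DyadicSetup μ W A X B V)
    (g : 𝒲 → 𝒳 → 𝒜 → ℬ → 𝒱 → (Fin d → ℝ))
    (hg : Measurable fun p : 𝒲 × 𝒳 × 𝒜 × ℬ × 𝒱 =>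
      g p.1 p.2.1 p.2.2.1 p.2.2.2.1 p.2.2.2.2)
    (hL2 : ∀ i j, MemLp (score g W A X B V i j) 2 μ)
    (hmean : ∀ i j, ∫ ω, score g W A X B V i j ω ∂μ = 0)
    (N M : ℕ) (hN : 0 < N) (hM : 0 < M) :
    ∀ t : ℕ, 1 ≤ t → t ≤ N + M + N * M →
      μ[Zmds μ g W A X B V N M t | natFilt μ g W A X B V N M (t - 1)] =ᵐ[μ] 0 := by
  classical
  haveI : IsProbabilityMeasure μ := hμ
  intro t ht1 ht2
  -- the σ-algebra generated by a set of the elementary random elements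
  set G : Set Idx → MeasurableSpace Ω :=
    (fun S => ⨆ u ∈ S, (idxMS u).comap (fam W A X B V u)) with hGdef
  have hiIndep : iIndep (fun u : Idx => (idxMS u).comap (fam W A X B V u)) μ := hsetup.indep
  have hfam_le : ∀ u : Idx, (idxMS u).comap (fam W A X B V u) ≤ ‹MeasurableSpace Ω› := by
    rintro (i | j | ij)
    · exact ((hsetup.measW i).prodMk (hsetup.measA i)).comap_le
    · exact ((hsetup.measX j).prodMk (hsetup.measB j)).comap_le
    · exact (hsetup.measV ij.1 ij.2).comap_le
  have hG_le : ∀ S, G S ≤ ‹MeasurableSpace Ω› := by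
    rw [hGdef]; exact fun S => iSup₂_le fun u _ => hfam_le u
  have hG_mono : ∀ {S T : Set Idx}, S ⊆ T → G S ≤ G T := by
    rw [hGdef]; exact fun h => biSup_mono h
  have hG_indep : ∀ {S T : Set Idx}, Disjoint S T → Indep (G S) (G T) μ := by
    rw [hGdef]; exact fun h => indep_iSup_of_disjoint hfam_le hiIndep h
  have hle_G : ∀ {u : Idx} {S : Set Idx}, u ∈ S →
      (idxMS u).comap (fam W A X B V u) ≤ G S := by
    rw [hGdef]
    exact fun {u S} hu => le_biSup (fun u : Idx => (idxMS u).comap (fam W A X B V u)) hu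
  have hfamG : ∀ {u : Idx} {S : Set Idx}, u ∈ S →
      @Measurable Ω (idxType 𝒲 𝒜 𝒳 ℬ 𝒱 u) (G S) (idxMS u) (fam W A X B V u) :=
    fun hu => measurable_iff_comap_le.mpr (hle_G hu)
  -- measurability of the basic random variables w.r.t. `G S`
  have hWm : ∀ (i : ℕ) (S : Set Idx), Sum.inl i ∈ S → Measurable[G S] (W i) :=
    fun i S hu => (measurable_fst.comp (hfamG hu) : _)
  have hAm : ∀ (i : ℕ) (S : Set Idx), Sum.inl i ∈ S → Measurable[G S] (A i) :=
    fun i S hu => (measurable_snd.comp (hfamG hu) : _)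
  have hXm : ∀ (j : ℕ) (S : Set Idx), Sum.inr (Sum.inl j) ∈ S → Measurable[G S] (X j) :=
    fun j S hu => (measurable_fst.comp (hfamG hu) : _)
  have hBm : ∀ (j : ℕ) (S : Set Idx), Sum.inr (Sum.inl j) ∈ S → Measurable[G S] (B j) :=
    fun j S hu => (measurable_snd.comp (hfamG hu) : _)
  have hVm : ∀ (i j : ℕ) (S : Set Idx), Sum.inr (Sum.inr (i, j)) ∈ S →
      Measurable[G S] (V i j) := fun i j S hu => (hfamG hu : _)
  have hscore_m : ∀ (i j : ℕ) (S : Set Idx), Sum.inl i ∈ S → Sum.inr (Sum.inl j) ∈ S →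
      Sum.inr (Sum.inr (i, j)) ∈ S → Measurable[G S] (score g W A X B V i j) :=
    fun i j S h1 h2 h3 => hg.comp ((hWm i S h1).prodMk ((hXm j S h2).prodMk
      ((hAm i S h1).prodMk ((hBm j S h2).prodMk (hVm i j S h3)))))
  -- the σ-algebra of `(W_i, X_j, A_i, B_j)`
  set H : ℕ → ℕ → MeasurableSpace Ω := (fun i j =>
    MeasurableSpace.comap (fun ω => (W i ω, X j ω, A i ω, B j ω)) inferInstance) with hHdef
  have htuple : ∀ i j, Measurable (fun ω => (W i ω, X j ω, A i ω, B j ω)) := fun i j =>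
    (hsetup.measW i).prodMk ((hsetup.measX j).prodMk
      ((hsetup.measA i).prodMk (hsetup.measB j)))
  have hH_le0 : ∀ i j, H i j ≤ ‹MeasurableSpace Ω› := fun i j => (htuple i j).comap_le
  have hH_le_G : ∀ (i j : ℕ) (S : Set Idx), Sum.inl i ∈ S → Sum.inr (Sum.inl j) ∈ S →
      H i j ≤ G S := fun i j S h1 h2 => measurable_iff_comap_le.mp
      ((hWm i S h1).prodMk ((hXm j S h2).prodMk ((hAm i S h1).prodMk (hBm j S h2))))
  have hFm_le_H : ∀ i j : ℕ,
      (idxMS (Sum.inl i)).comap (fam W A X B V (Sum.inl i)) ≤ H i j := by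
    intro i j
    have hT : Measurable[H i j] (fun ω => (W i ω, X j ω, A i ω, B j ω)) :=
      measurable_iff_comap_le.mpr le_rfl
    exact measurable_iff_comap_le.mp (hT.fst.prodMk hT.snd.snd.fst)
  have hFmX_le_H : ∀ i j : ℕ,
      (idxMS (Sum.inr (Sum.inl j))).comap (fam W A X B V (Sum.inr (Sum.inl j))) ≤ H i j := by
    intro i j
    have hT : Measurable[H i j] (fun ω => (W i ω, X j ω, A i ω, B j ω)) :=
      measurable_iff_comap_le.mpr le_rfl
    exact measurable_iff_comap_le.mp (hT.snd.fst.prodMk hT.snd.snd.snd)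
  -- integrability and means
  have hint_score : ∀ i j, Integrable (score g W A X B V i j) μ :=
    fun i j => (hL2 i j).integrable one_le_two
  have hsbar_meas : ∀ i j, StronglyMeasurable[H i j] (sbar μ g W A X B V i j) :=
    fun i j => stronglyMeasurable_condExp
  have hzero_sbar : ∀ i j, ∫ ω, sbar μ g W A X B V i j ω ∂μ = 0 := by
    intro i j
    rw [sbar, integral_condExp (hH_le0 i j)]
    exact hmean i j
  -- measurability of the ordered sequence
  set supp : ℕ → Set Idx := (fun r =>
    if r ≤ N then {Sum.inl r}
    else if r ≤ N + M then {Sum.inr (Sum.inl (r - N))}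
    else {Sum.inl ((r - N - M - 1) / M + 1), Sum.inr (Sum.inl ((r - N - M - 1) % M + 1)),
      Sum.inr (Sum.inr ((r - N - M - 1) / M + 1, (r - N - M - 1) % M + 1))}) with hsupp
  have hZsupp : ∀ r, Measurable[G (supp r)] (Zmds μ g W A X B V N M r) := by
    intro r
    by_cases h1 : r ≤ N
    · simp only [Zmds, hsupp, if_pos h1]
      rw [show supp r = {Sum.inl r} from if_pos h1]
      have hle : MeasurableSpace.comap (fun ω => (W r ω, A r ω)) inferInstance ≤
          G {Sum.inl r} := hle_G (u := Sum.inl r) (S := {Sum.inl r}) rfl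
      show Measurable[G {Sum.inl r}] (((N : ℝ)⁻¹) • sbarc μ g W A X B V r)
      exact (((stronglyMeasurable_condExp.mono hle).const_smul ((N : ℝ)⁻¹)).measurable)
    · by_cases h2 : r ≤ N + M
      · simp only [Zmds, hsupp, if_neg h1, if_pos h2]
        rw [show supp r = {Sum.inr (Sum.inl (r - N))} from (if_neg h1).trans (if_pos h2)]
        have hle : MeasurableSpace.comap (fun ω => (X (r - N) ω, B (r - N) ω)) inferInstance ≤
            G {Sum.inr (Sum.inl (r - N))} :=
          hle_G (u := Sum.inr (Sum.inl (r - N))) (S := {Sum.inr (Sum.inl (r - N))}) rfl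
        show Measurable[G {Sum.inr (Sum.inl (r - N))}]
          (((M : ℝ)⁻¹) • sbarp μ g W A X B V (r - N))
        exact (((stronglyMeasurable_condExp.mono hle).const_smul ((M : ℝ)⁻¹)).measurable)
      · simp only [Zmds, hsupp, if_neg h1, if_neg h2]
        rw [show supp r = _ from (if_neg h1).trans (if_neg h2)]
        set S3 : Set Idx := {Sum.inl ((r - N - M - 1) / M + 1),
          Sum.inr (Sum.inl ((r - N - M - 1) % M + 1)),
          Sum.inr (Sum.inr ((r - N - M - 1) / M + 1, (r - N - M - 1) % M + 1))} with hS3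
        show Measurable[G S3] ((((N : ℝ) * M)⁻¹) •
          (score g W A X B V ((r - N - M - 1) / M + 1) ((r - N - M - 1) % M + 1) -
            sbar μ g W A X B V ((r - N - M - 1) / M + 1) ((r - N - M - 1) % M + 1)))
        have hsc : Measurable[G S3] (score g W A X B V ((r - N - M - 1) / M + 1)
            ((r - N - M - 1) % M + 1)) :=
          hscore_m _ _ S3 (by simp [hS3]) (by simp [hS3]) (by simp [hS3])
        have hsb := ((hsbar_meas ((r - N - M - 1) / M + 1) ((r - N - M - 1) % M + 1)).mono
          (hH_le_G _ _ S3 (by simp [hS3]) (by simp [hS3])))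
        exact ((hsc.stronglyMeasurable.sub hsb).const_smul _).measurable
  have hFilt_le : ∀ T : Set Idx, (∀ r, 1 ≤ r → r ≤ t - 1 → supp r ⊆ T) →
      natFilt μ g W A X B V N M (t - 1) ≤ G T := by
    intro T hT
    refine iSup₂_le fun r hr => ?_
    rw [Finset.mem_Icc] at hr
    exact measurable_iff_comap_le.mp ((hZsupp r).mono (hG_mono (hT r hr.1 hr.2)) le_rfl)
  -- reduction to a larger independent σ-algebra
  have hfinish : ∀ S : Set Idx,
      natFilt μ g W A X B V N M (t - 1) ≤ G S →
      μ[Zmds μ g W A X B V N M t | G S] =ᵐ[μ] 0 →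
      μ[Zmds μ g W A X B V N M t | natFilt μ g W A X B V N M (t - 1)] =ᵐ[μ] 0 := by
    intro S hle hz
    refine ((condExp_condExp_of_le hle (hG_le S)).symm.trans ?_)
    exact (condExp_congr_ae hz).trans (by rw [condExp_zero])
  by_cases hc1 : t ≤ N
  · -- Case 1 : Z_t = N⁻¹ • s̄c_t
    refine hfinish {Sum.inl t}ᶜ (hFilt_le _ ?_) ?_
    · intro r hr1 hr2
      have hrN : r ≤ N := by omega
      simp only [hsupp, if_pos hrN, Set.singleton_subset_iff, Set.mem_compl_iff,
        Set.mem_singleton_iff, Sum.inl.injEq]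
      omega
    · have hZm : StronglyMeasurable[(idxMS (Sum.inl t)).comap (fam W A X B V (Sum.inl t))]
          (Zmds μ g W A X B V N M t) := by
        simp only [Zmds, if_pos hc1]
        show StronglyMeasurable[(idxMS (Sum.inl t)).comap (fam W A X B V (Sum.inl t))]
          (((N : ℝ)⁻¹) • sbarc μ g W A X B V t)
        exact stronglyMeasurable_condExp.const_smul _
      have hind : Indep ((idxMS (Sum.inl t)).comap (fam W A X B V (Sum.inl t)))
          (G {Sum.inl t}ᶜ) μ :=
        indep_of_indep_of_le_left (hG_indep disjoint_compl_right)
          (hle_G (u := Sum.inl t) (S := {Sum.inl t}) rfl)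
      have hmean0 : ∫ ω, Zmds μ g W A X B V N M t ω ∂μ = 0 := by
        simp only [Zmds, if_pos hc1]
        rw [integral_smul]
        have hz : ∫ ω, sbarc μ g W A X B V t ω ∂μ = 0 := by
          rw [sbarc, integral_condExp (((hsetup.measW t).prodMk (hsetup.measA t)).comap_le)]
          exact hzero_sbar t 1
        rw [hz, smul_zero]
      refine (condExp_indep_eq (hfam_le (Sum.inl t)) (hG_le {Sum.inl t}ᶜ) hZm hind).trans ?_
      rw [hmean0]
      exact Filter.EventuallyEq.of_eq rfl
  · by_cases hc2 : t ≤ N + M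
    · -- Case 2 : Z_t = M⁻¹ • s̄p_{t-N}
      refine hfinish {Sum.inr (Sum.inl (t - N))}ᶜ (hFilt_le _ ?_) ?_
      · intro r hr1 hr2
        by_cases hrN : r ≤ N
        · simp only [hsupp, if_pos hrN, Set.singleton_subset_iff, Set.mem_compl_iff,
            Set.mem_singleton_iff]
          simp
        · have hrNM : r ≤ N + M := by omega
          simp only [hsupp, if_neg hrN, if_pos hrNM, Set.singleton_subset_iff,
            Set.mem_compl_iff, Set.mem_singleton_iff, Sum.inr.injEq, Sum.inl.injEq]
          omega
      · have hZm : StronglyMeasurable[(idxMS (Sum.inr (Sum.inl (t - N)))).comap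
            (fam W A X B V (Sum.inr (Sum.inl (t - N))))] (Zmds μ g W A X B V N M t) := by
          simp only [Zmds, if_neg hc1, if_pos hc2]
          show StronglyMeasurable[(idxMS (Sum.inr (Sum.inl (t - N)))).comap
            (fam W A X B V (Sum.inr (Sum.inl (t - N))))]
            (((M : ℝ)⁻¹) • sbarp μ g W A X B V (t - N))
          exact stronglyMeasurable_condExp.const_smul _
        have hind : Indep ((idxMS (Sum.inr (Sum.inl (t - N)))).comap
            (fam W A X B V (Sum.inr (Sum.inl (t - N)))))
            (G {Sum.inr (Sum.inl (t - N))}ᶜ) μ :=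
          indep_of_indep_of_le_left (hG_indep disjoint_compl_right)
            (hle_G (u := Sum.inr (Sum.inl (t - N))) (S := {Sum.inr (Sum.inl (t - N))}) rfl)
        have hmean0 : ∫ ω, Zmds μ g W A X B V N M t ω ∂μ = 0 := by
          simp only [Zmds, if_neg hc1, if_pos hc2]
          rw [integral_smul]
          have hz : ∫ ω, sbarp μ g W A X B V (t - N) ω ∂μ = 0 := by
            rw [sbarp, integral_condExp
              (((hsetup.measX (t - N)).prodMk (hsetup.measB (t - N))).comap_le)]
            exact hzero_sbar 1 (t - N)
          rw [hz, smul_zero]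
        refine (condExp_indep_eq (hfam_le (Sum.inr (Sum.inl (t - N))))
          (hG_le _) hZm hind).trans ?_
        rw [hmean0]
        exact Filter.EventuallyEq.of_eq rfl
    · -- Case 3 : Z_t = (NM)⁻¹ • (s_{ij} - s̄_{ij})
      set i0 : ℕ := (t - N - M - 1) / M + 1 with hi0
      set j0 : ℕ := (t - N - M - 1) % M + 1 with hj0
      refine hfinish {Sum.inr (Sum.inr (i0, j0))}ᶜ (hFilt_le _ ?_) ?_
      · -- the filtration up to `t-1` does not involve `V_{i0 j0}`
        intro r hr1 hr2
        by_cases hrN : r ≤ N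
        · simp only [hsupp, if_pos hrN, Set.singleton_subset_iff, Set.mem_compl_iff,
            Set.mem_singleton_iff]
          simp
        · by_cases hrNM : r ≤ N + M
          · simp only [hsupp, if_neg hrN, if_pos hrNM, Set.singleton_subset_iff,
              Set.mem_compl_iff, Set.mem_singleton_iff]
            simp
          · simp only [hsupp, if_neg hrN, if_neg hrNM]
            have hne : ¬((r - N - M - 1) / M + 1 = i0 ∧ (r - N - M - 1) % M + 1 = j0) := by
              rintro ⟨h1, h2⟩
              rw [hi0] at h1
              rw [hj0] at h2
              have e1 := Nat.div_add_mod (r - N - M - 1) M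
              have e2 := Nat.div_add_mod (t - N - M - 1) M
              have d1 : (r - N - M - 1) / M = (t - N - M - 1) / M := by omega
              have d2 : (r - N - M - 1) % M = (t - N - M - 1) % M := by omega
              have : (r - N - M - 1) = (t - N - M - 1) := by
                rw [← e1, ← e2, d1, d2]
              omega
            intro u hu
            simp only [Set.mem_insert_iff, Set.mem_singleton_iff] at hu
            simp only [Set.mem_compl_iff, Set.mem_singleton_iff]
            rcases hu with rfl | rfl | rfl
            · simp
            · simp
            · simp only [ne_eq, Sum.inr.injEq, Prod.mk.injEq]
              exact fun h => hne h
      · -- conditional mean zero given everything except `V_{i0 j0}`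
        have hmem1 : (Sum.inl i0 : Idx) ∈
            ({Sum.inr (Sum.inr (i0, j0))}ᶜ : Set Idx) := by simp
        have hmem2 : (Sum.inr (Sum.inl j0) : Idx) ∈
            ({Sum.inr (Sum.inr (i0, j0))}ᶜ : Set Idx) := by simp
        have hGeq : G {Sum.inr (Sum.inr (i0, j0))}ᶜ = H i0 j0 ⊔
            G ({Sum.inl i0, Sum.inr (Sum.inl j0), Sum.inr (Sum.inr (i0, j0))}ᶜ) := by
          refine le_antisymm ?_
            (sup_le (hH_le_G i0 j0 _ hmem1 hmem2) (hG_mono ?_))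
          · have hle1 : ∀ u : Idx, u ∈ ({Sum.inr (Sum.inr (i0, j0))}ᶜ : Set Idx) →
                (idxMS u).comap (fam W A X B V u) ≤ H i0 j0 ⊔
                G ({Sum.inl i0, Sum.inr (Sum.inl j0), Sum.inr (Sum.inr (i0, j0))}ᶜ) := by
              intro u hu
              by_cases h1 : u = Sum.inl i0
              · subst h1; exact le_trans (hFm_le_H i0 j0) le_sup_left
              · by_cases h2 : u = Sum.inr (Sum.inl j0)
                · subst h2; exact le_trans (hFmX_le_H i0 j0) le_sup_left
                · refine le_trans (hle_G (S := ({Sum.inl i0, Sum.inr (Sum.inl j0),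
                    Sum.inr (Sum.inr (i0, j0))}ᶜ : Set Idx)) ?_) le_sup_right
                  simp only [Set.mem_compl_iff, Set.mem_singleton_iff] at hu
                  simp only [Set.mem_compl_iff, Set.mem_insert_iff, Set.mem_singleton_iff]
                  tauto
            rw [hGdef]
            exact iSup₂_le hle1
          · refine Set.compl_subset_compl.mpr ?_
            intro u hu
            simp only [Set.mem_singleton_iff] at hu
            simp only [Set.mem_insert_iff, Set.mem_singleton_iff]
            tauto
        have hindep3 : Indep
            (G {Sum.inl i0, Sum.inr (Sum.inl j0), Sum.inr (Sum.inr (i0, j0))})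
            (G {Sum.inl i0, Sum.inr (Sum.inl j0), Sum.inr (Sum.inr (i0, j0))}ᶜ) μ :=
          hG_indep disjoint_compl_right
        have hscore_sm : StronglyMeasurable[G {Sum.inl i0, Sum.inr (Sum.inl j0),
            Sum.inr (Sum.inr (i0, j0))}] (score g W A X B V i0 j0) :=
          (hscore_m i0 j0 _ (by simp) (by simp) (by simp)).stronglyMeasurable
        have hkey : μ[score g W A X B V i0 j0 | G {Sum.inr (Sum.inr (i0, j0))}ᶜ]
            =ᵐ[μ] sbar μ g W A X B V i0 j0 := by
          rw [hGeq]
          exact condexp_sup_indep' (hG_le _) (hG_le _)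
            (hH_le_G i0 j0 _ (by simp) (by simp)) (hint_score i0 j0) hscore_sm hindep3
        have hZt : Zmds μ g W A X B V N M t = (((N : ℝ) * M)⁻¹) •
            (score g W A X B V i0 j0 - sbar μ g W A X B V i0 j0) := by
          funext ω
          simp only [Zmds, if_neg hc1, if_neg hc2, Pi.smul_apply, Pi.sub_apply, hi0, hj0]
        have hconst : μ[sbar μ g W A X B V i0 j0 | G {Sum.inr (Sum.inr (i0, j0))}ᶜ] =
            sbar μ g W A X B V i0 j0 :=
          condExp_of_stronglyMeasurable (hG_le _)
            ((hsbar_meas i0 j0).mono (hH_le_G i0 j0 _ hmem1 hmem2)) integrable_condExp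
        have hsub : μ[score g W A X B V i0 j0 - sbar μ g W A X B V i0 j0 |
              G {Sum.inr (Sum.inr (i0, j0))}ᶜ] =ᵐ[μ]
            μ[score g W A X B V i0 j0 | G {Sum.inr (Sum.inr (i0, j0))}ᶜ] -
              μ[sbar μ g W A X B V i0 j0 | G {Sum.inr (Sum.inr (i0, j0))}ᶜ] :=
          condExp_sub (hint_score i0 j0) integrable_condExp _
        rw [hZt]
        refine (condExp_smul _ _ _).trans ?_
        filter_upwards [hsub, hkey] with ω h1 h2
        simp only [Pi.smul_apply, Pi.zero_apply]
        rw [h1, Pi.sub_apply, h2, hconst, sub_self, smul_zero]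

end SparseNet
end

section
/- Let R_{ij}, 1 ≤ i ≤ N, 1 ≤ j ≤ M, be random vectors in ℝ^{1+k} with first coordinate equal to 1 and ‖R_{ij}‖ ≤ C almost surely, and for ϑ ∈ ℝ^{1+k} define H_n(ϑ) = −(NM)^{-1} Σ_{i=1}^N Σ_{j=1}^M e(R_{ij}'ϑ)[1 − e(R_{ij}'ϑ)] R_{ij} R_{ij}'. Fix ᾱ > 0 and a bounded set B ⊂ ℝ^k. Then there is a constant L, depending only on ᾱ, C and B, such that for every n ≥ 1 and all θ = (α, β')', θ̃ = (α̃, β̃')' with α, α̃ ∈ (0, ᾱ] and β, β̃ ∈ B, writing θ_n = (ln(α/n), β')' and θ̃_n = (ln(α̃/n), β̃')', one has ‖n H_n(θ_n) − n H_n(θ̃_n)‖ ≤ L ‖θ − θ̃‖ almost surely. (Lipschitz continuity, uniformly in n, of the rescaled composite-likelihood Hessian under the sparse parametrization.) -/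
open MeasureTheory Filter
open scoped BigOperators Topology

namespace SparseNet

/-- The logistic function `e(v) = exp(v)/(1 + exp(v))`. -/
noncomputable def logistic (v : ℝ) : ℝ := Real.exp v / (1 + Real.exp v)

/-- Frobenius norm of a real matrix. -/
noncomputable def frobNorm {m n : ℕ} (M : Matrix (Fin m) (Fin n) ℝ) : ℝ :=
  Real.sqrt (∑ a, ∑ b, (M a b) ^ 2)

/-- Euclidean norm of a real vector. -/
noncomputable def euclNorm {m : ℕ} (v : Fin m → ℝ) : ℝ :=
  Real.sqrt (∑ a, (v a) ^ 2)

/-- The composite-likelihood Hessian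
`H(ϑ) = −(NM)⁻¹ Σᵢ Σⱼ e(R_{ij}'ϑ)[1 − e(R_{ij}'ϑ)] R_{ij} R_{ij}'`. -/
noncomputable def Hess {Ω : Type} {k : ℕ} (R : ℕ → ℕ → Ω → Fin (k + 1) → ℝ)
    (N M : ℕ) (ϑ : Fin (k + 1) → ℝ) (ω : Ω) : Matrix (Fin (k + 1)) (Fin (k + 1)) ℝ :=
  Matrix.of fun a b => -(((N : ℝ) * M)⁻¹ *
    ∑ i ∈ Finset.Icc 1 N, ∑ j ∈ Finset.Icc 1 M,
      logistic (∑ u, R i j ω u * ϑ u) * (1 - logistic (∑ u, R i j ω u * ϑ u)) *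
        R i j ω a * R i j ω b)

lemma abs_coord_le {m : ℕ} {v : Fin m → ℝ} {C : ℝ} (h : euclNorm v ≤ C) (a : Fin m) :
    |v a| ≤ C := by
  have h1 : |v a| ≤ euclNorm v := by
    rw [euclNorm, ← Real.sqrt_sq_eq_abs]
    exact Real.sqrt_le_sqrt (Finset.single_le_sum (f := fun b => (v b)^2)
      (fun b _ => sq_nonneg _) (Finset.mem_univ a))
  linarith

lemma exp_lip {a b S : ℝ} (ha : |a| ≤ S) (hb : |b| ≤ S) :
    |Real.exp a - Real.exp b| ≤ Real.exp S * |a - b| := by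
  wlog hab : b ≤ a generalizing a b
  · rw [abs_sub_comm, abs_sub_comm a b]; exact this hb ha (le_of_not_ge hab)
  have haS : a ≤ S := (abs_le.1 ha).2
  have h1 : Real.exp a * (1 + (b - a)) ≤ Real.exp b := by
    calc Real.exp a * (1 + (b - a)) ≤ Real.exp a * Real.exp (b - a) :=
          mul_le_mul_of_nonneg_left (by linarith [Real.add_one_le_exp (b - a)]) (Real.exp_pos a).le
      _ = Real.exp b := by rw [← Real.exp_add]; ring_nf
  have h2 : Real.exp b ≤ Real.exp a := Real.exp_le_exp.2 hab
  rw [abs_of_nonneg (by linarith), abs_of_nonneg (by linarith)]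
  have h3 : Real.exp a ≤ Real.exp S := Real.exp_le_exp.2 haS
  nlinarith [Real.exp_pos a]

lemma phi_lip {n x y : ℝ} (hn : 1 ≤ n) (hx : 0 ≤ x) (hy : 0 ≤ y) :
    |n^2 * x / (n + x)^2 - n^2 * y / (n + y)^2| ≤ |x - y| := by
  have h1 : 0 < n + x := by linarith
  have h2 : 0 < n + y := by linarith
  have key : n^2*x/(n+x)^2 - n^2*y/(n+y)^2
      = (x - y) * (n^2 - x*y) * (n^2 / ((n+x)^2 * (n+y)^2)) := by
    field_simp
    ring
  rw [key, abs_mul, abs_mul]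
  have h3 : |n^2 - x*y| ≤ (n+x)*(n+y) := by
    rw [abs_le]; constructor <;> nlinarith
  have h4 : |n^2 / ((n+x)^2*(n+y)^2)| = n^2/((n+x)^2*(n+y)^2) := abs_of_nonneg (by positivity)
  rw [h4]
  calc |x-y| * |n^2 - x*y| * (n^2/((n+x)^2*(n+y)^2))
      ≤ |x-y| * ((n+x)*(n+y)) * (n^2/((n+x)^2*(n+y)^2)) := by
        apply mul_le_mul_of_nonneg_right (mul_le_mul_of_nonneg_left h3 (abs_nonneg _)) (by positivity)
    _ = |x-y| * (n^2 / ((n+x)*(n+y))) := by field_simp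
    _ ≤ |x-y| * 1 := by
        apply mul_le_mul_of_nonneg_left _ (abs_nonneg _)
        rw [div_le_one (by positivity)]; nlinarith
    _ = |x-y| := mul_one _

lemma nw_eq {n : ℝ} (hn : 0 < n) (v : ℝ) :
    n * (logistic v * (1 - logistic v)) = n^2 * (n * Real.exp v) / (n + n * Real.exp v)^2 := by
  have h := Real.exp_pos v
  rw [logistic]
  have h1 : (0:ℝ) < 1 + Real.exp v := by linarith
  field_simp
  ring

lemma scalar_lip {n αbar S α α' s s' : ℝ} (hn : 1 ≤ n)
    (hα : 0 < α) (hα2 : α ≤ αbar) (hα' : 0 < α') (hα2' : α' ≤ αbar)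
    (hs : |s| ≤ S) (hs' : |s'| ≤ S) :
    |n * (logistic (Real.log (α / n) + s) * (1 - logistic (Real.log (α / n) + s))) -
     n * (logistic (Real.log (α' / n) + s') * (1 - logistic (Real.log (α' / n) + s')))|
      ≤ Real.exp S * |α - α'| + αbar * Real.exp S * |s - s'| := by
  have hn0 : (0:ℝ) < n := by linarith
  have e1 : n * Real.exp (Real.log (α / n) + s) = α * Real.exp s := by
    rw [Real.exp_add, Real.exp_log (by positivity)]
    field_simp
  have e1' : n * Real.exp (Real.log (α' / n) + s') = α' * Real.exp s' := by
    rw [Real.exp_add, Real.exp_log (by positivity)]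
    field_simp
  rw [nw_eq hn0, nw_eq hn0, e1, e1']
  have hx : 0 ≤ α * Real.exp s := by positivity
  have hy : 0 ≤ α' * Real.exp s' := by positivity
  have hES : Real.exp s ≤ Real.exp S := Real.exp_le_exp.2 (abs_le.1 hs).2
  have h2 := exp_lip hs hs'
  calc |n^2 * (α * Real.exp s) / (n + α * Real.exp s)^2
        - n^2 * (α' * Real.exp s') / (n + α' * Real.exp s')^2|
      ≤ |α * Real.exp s - α' * Real.exp s'| := phi_lip hn hx hy
    _ ≤ |α - α'| * Real.exp s + α' * |Real.exp s - Real.exp s'| := by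
        have heq : α * Real.exp s - α' * Real.exp s'
            = (α - α') * Real.exp s + α' * (Real.exp s - Real.exp s') := by ring
        rw [heq]
        refine (abs_add_le _ _).trans ?_
        rw [abs_mul, abs_mul, abs_of_nonneg (Real.exp_pos s).le, abs_of_nonneg hα'.le]
    _ ≤ Real.exp S * |α - α'| + αbar * Real.exp S * |s - s'| := by
        have A : |α - α'| * Real.exp s ≤ Real.exp S * |α - α'| := by
          rw [mul_comm]; exact mul_le_mul_of_nonneg_right hES (abs_nonneg _)
        have B : α' * |Real.exp s - Real.exp s'| ≤ αbar * (Real.exp S * |s - s'|) :=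
          mul_le_mul hα2' h2 (abs_nonneg _) (by linarith)
        have B' : αbar * (Real.exp S * |s - s'|) = αbar * Real.exp S * |s - s'| :=
          (mul_assoc _ _ _).symm
        linarith

lemma entry_lip {N M : ℕ} (f g h1 h2 : ℕ → ℕ → ℝ) (n E C : ℝ) (hE : 0 ≤ E) (hC : 0 ≤ C)
    (hfg : ∀ i ∈ Finset.Icc 1 N, ∀ j ∈ Finset.Icc 1 M, |n * f i j - n * g i j| ≤ E)
    (hb1 : ∀ i ∈ Finset.Icc 1 N, ∀ j ∈ Finset.Icc 1 M, |h1 i j| ≤ C)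
    (hb2 : ∀ i ∈ Finset.Icc 1 N, ∀ j ∈ Finset.Icc 1 M, |h2 i j| ≤ C) :
    |n * -(((N : ℝ) * M)⁻¹ *
        ∑ i ∈ Finset.Icc 1 N, ∑ j ∈ Finset.Icc 1 M, f i j * h1 i j * h2 i j)
     - n * -(((N : ℝ) * M)⁻¹ *
        ∑ i ∈ Finset.Icc 1 N, ∑ j ∈ Finset.Icc 1 M, g i j * h1 i j * h2 i j)|
      ≤ E * C^2 := by
  have hc : (0:ℝ) ≤ ((N : ℝ) * M)⁻¹ := by positivity
  set A := ∑ i ∈ Finset.Icc 1 N, ∑ j ∈ Finset.Icc 1 M, f i j * h1 i j * h2 i j with hA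
  set B := ∑ i ∈ Finset.Icc 1 N, ∑ j ∈ Finset.Icc 1 M, g i j * h1 i j * h2 i j with hB
  have hre : n * -(((N : ℝ) * M)⁻¹ * A) - n * -(((N : ℝ) * M)⁻¹ * B)
      = ((N : ℝ) * M)⁻¹ * (n * B - n * A) := by ring
  rw [hre, abs_mul, abs_of_nonneg hc]
  have hBA : |n * B - n * A| ≤ (N : ℝ) * M * (E * C^2) := by
    have hrw : n * B - n * A = ∑ i ∈ Finset.Icc 1 N, ∑ j ∈ Finset.Icc 1 M,
        (n * (g i j * h1 i j * h2 i j) - n * (f i j * h1 i j * h2 i j)) := by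
      rw [hA, hB, Finset.mul_sum, Finset.mul_sum, ← Finset.sum_sub_distrib]
      exact Finset.sum_congr rfl fun i _ => by
        rw [Finset.mul_sum, Finset.mul_sum, ← Finset.sum_sub_distrib]
    rw [hrw]
    calc |∑ i ∈ Finset.Icc 1 N, ∑ j ∈ Finset.Icc 1 M,
          (n * (g i j * h1 i j * h2 i j) - n * (f i j * h1 i j * h2 i j))|
        ≤ ∑ i ∈ Finset.Icc 1 N, |∑ j ∈ Finset.Icc 1 M,
          (n * (g i j * h1 i j * h2 i j) - n * (f i j * h1 i j * h2 i j))| :=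
          Finset.abs_sum_le_sum_abs _ _
      _ ≤ ∑ i ∈ Finset.Icc 1 N, ((M : ℝ) * (E * C^2)) := by
          refine Finset.sum_le_sum fun i hi => ?_
          calc |∑ j ∈ Finset.Icc 1 M,
                (n * (g i j * h1 i j * h2 i j) - n * (f i j * h1 i j * h2 i j))|
              ≤ ∑ j ∈ Finset.Icc 1 M,
                |n * (g i j * h1 i j * h2 i j) - n * (f i j * h1 i j * h2 i j)| :=
                Finset.abs_sum_le_sum_abs _ _
            _ ≤ ∑ j ∈ Finset.Icc 1 M, (E * C^2) := by
                refine Finset.sum_le_sum fun j hj => ?_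
                have heq : n * (g i j * h1 i j * h2 i j) - n * (f i j * h1 i j * h2 i j)
                    = (n * g i j - n * f i j) * h1 i j * h2 i j := by ring
                rw [heq, abs_mul, abs_mul]
                have e1 : |n * g i j - n * f i j| ≤ E := by
                  rw [abs_sub_comm]; exact hfg i hi j hj
                calc |n * g i j - n * f i j| * |h1 i j| * |h2 i j|
                    ≤ E * C * C :=
                      mul_le_mul (mul_le_mul e1 (hb1 i hi j hj) (abs_nonneg _) hE)
                        (hb2 i hi j hj) (abs_nonneg _) (by positivity)
                  _ = E * C^2 := by ring
            _ = (M : ℝ) * (E * C^2) := by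
                rw [Finset.sum_const, Nat.card_Icc, nsmul_eq_mul]
                simp
      _ = (N : ℝ) * ((M : ℝ) * (E * C^2)) := by
          rw [Finset.sum_const, Nat.card_Icc, nsmul_eq_mul]
          simp
      _ = (N : ℝ) * M * (E * C^2) := by ring
  calc ((N : ℝ) * M)⁻¹ * |n * B - n * A|
      ≤ ((N : ℝ) * M)⁻¹ * ((N : ℝ) * M * (E * C^2)) := mul_le_mul_of_nonneg_left hBA hc
    _ ≤ E * C^2 := by
        rcases eq_or_ne ((N : ℝ) * (M : ℝ)) 0 with h0 | h0
        · rw [h0, inv_zero, zero_mul]; positivity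
        · rw [show ((N : ℝ) * M)⁻¹ * ((N : ℝ) * M * (E * C^2))
              = (((N : ℝ) * M)⁻¹ * ((N : ℝ) * M)) * (E * C^2) from by ring,
            inv_mul_cancel₀ h0, one_mul]

/-- Lipschitz continuity, uniformly in `n` (and in the data), of the
rescaled composite-likelihood Hessian under the sparse parametrization
`θ_n = (ln(α/n), β')'`, with Lipschitz constant depending only on `ᾱ`, `C` and `B`. -/
theorem statement13 (k : ℕ) (αbar C : ℝ) (hαbar : 0 < αbar) (hC : 0 < C)
    (Bset : Set (Fin k → ℝ)) (hBbd : Bornology.IsBounded Bset) :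
    ∃ L : ℝ, ∀ (Ω : Type) (_ : MeasurableSpace Ω) (μ : Measure Ω),
      IsProbabilityMeasure μ →
      ∀ (N M : ℕ) (R : ℕ → ℕ → Ω → Fin (k + 1) → ℝ),
      (∀ i j, ∀ᵐ ω ∂μ, R i j ω 0 = 1 ∧ euclNorm (R i j ω) ≤ C) →
      ∀ n : ℕ, 1 ≤ n →
      ∀ α αt : ℝ, α ∈ Set.Ioc 0 αbar → αt ∈ Set.Ioc 0 αbar →
      ∀ β ∈ Bset, ∀ βt ∈ Bset,
      ∀ᵐ ω ∂μ,
        frobNorm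
            ((n : ℝ) • Hess R N M (Fin.cons (Real.log (α / n)) β) ω -
              (n : ℝ) • Hess R N M (Fin.cons (Real.log (αt / n)) βt) ω) ≤
          L * Real.sqrt ((α - αt) ^ 2 + ∑ a, (β a - βt a) ^ 2) := by
  obtain ⟨r0, hr0⟩ := isBounded_iff_forall_norm_le.1 hBbd
  set r : ℝ := max r0 0 with hrdef
  have hr : ∀ β ∈ Bset, ∀ u, |β u| ≤ r := by
    intro β hβ u
    have h1 : |β u| = ‖β u‖ := (Real.norm_eq_abs _).symm
    rw [h1]
    exact le_trans (norm_le_pi_norm β u) (le_trans (hr0 β hβ) (le_max_left _ _))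
  have hr_nn : 0 ≤ r := le_max_right _ _
  set S : ℝ := (k : ℝ) * C * r with hSdef
  set K : ℝ := Real.exp S * (1 + αbar * C * k) with hKdef
  have hK0 : 0 ≤ K := by
    have := Real.exp_pos S
    have : (0:ℝ) ≤ αbar * C * k := by positivity
    positivity
  refine ⟨((k : ℝ) + 1) * (K * C^2), ?_⟩
  intro Ω _ μ _ N M R hR n hn α αt hα hαt β hβ βt hβt
  have hae : ∀ᵐ ω ∂μ, ∀ i j, R i j ω 0 = 1 ∧ euclNorm (R i j ω) ≤ C := by
    rw [MeasureTheory.ae_all_iff]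
    intro i
    rw [MeasureTheory.ae_all_iff]
    exact hR i
  filter_upwards [hae] with ω hω
  set D : ℝ := Real.sqrt ((α - αt) ^ 2 + ∑ a, (β a - βt a) ^ 2) with hDdef
  have hD0 : 0 ≤ D := Real.sqrt_nonneg _
  have hsumsq : (0:ℝ) ≤ ∑ a, (β a - βt a) ^ 2 :=
    Finset.sum_nonneg fun a _ => sq_nonneg _
  have hαD : |α - αt| ≤ D := by
    rw [← Real.sqrt_sq_eq_abs]
    exact Real.sqrt_le_sqrt (by linarith)
  have hβD : Real.sqrt (∑ a, (β a - βt a) ^ 2) ≤ D :=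
    Real.sqrt_le_sqrt (by nlinarith [sq_nonneg (α - αt)])
  have hn1 : (1:ℝ) ≤ (n : ℝ) := by exact_mod_cast hn
  -- scalar Lipschitz bound for each i, j
  have hscal : ∀ i ∈ Finset.Icc 1 N, ∀ j ∈ Finset.Icc 1 M,
      |(n : ℝ) * (logistic (∑ u, R i j ω u * (Fin.cons (Real.log (α / n)) β : Fin (k+1) → ℝ) u) *
          (1 - logistic (∑ u, R i j ω u * (Fin.cons (Real.log (α / n)) β : Fin (k+1) → ℝ) u)))
        - (n : ℝ) * (logistic (∑ u, R i j ω u * (Fin.cons (Real.log (αt / n)) βt : Fin (k+1) → ℝ) u) *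
          (1 - logistic (∑ u, R i j ω u * (Fin.cons (Real.log (αt / n)) βt : Fin (k+1) → ℝ) u)))| ≤ K * D := by
    intro i _ j _
    obtain ⟨hω1, hω2⟩ := hω i j
    set s1 : ℝ := ∑ u : Fin k, R i j ω u.succ * β u with hs1def
    set s2 : ℝ := ∑ u : Fin k, R i j ω u.succ * βt u with hs2def
    have hv1 : ∑ u, R i j ω u * (Fin.cons (Real.log (α / n)) β : Fin (k+1) → ℝ) u = Real.log (α / n) + s1 := by
      rw [Fin.sum_univ_succ]
      simp [hω1, hs1def]
    have hv2 : ∑ u, R i j ω u * (Fin.cons (Real.log (αt / n)) βt : Fin (k+1) → ℝ) u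
        = Real.log (αt / n) + s2 := by
      rw [Fin.sum_univ_succ]
      simp [hω1, hs2def]
    have hRb : ∀ u : Fin k, |R i j ω u.succ| ≤ C := fun u => abs_coord_le hω2 _
    have habs_s : ∀ (γ : Fin k → ℝ), γ ∈ Bset →
        |∑ u : Fin k, R i j ω u.succ * γ u| ≤ S := by
      intro γ hγ
      calc |∑ u : Fin k, R i j ω u.succ * γ u|
          ≤ ∑ u : Fin k, |R i j ω u.succ * γ u| := Finset.abs_sum_le_sum_abs _ _
        _ ≤ ∑ _u : Fin k, C * r := by
            refine Finset.sum_le_sum fun u _ => ?_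
            rw [abs_mul]
            exact mul_le_mul (hRb u) (hr γ hγ u) (abs_nonneg _) hC.le
        _ = S := by
            rw [Finset.sum_const, Finset.card_univ, Fintype.card_fin, nsmul_eq_mul, hSdef]
            ring
    have hs1S : |s1| ≤ S := habs_s β hβ
    have hs2S : |s2| ≤ S := habs_s βt hβt
    have hdiff : |s1 - s2| ≤ (k : ℝ) * (C * D) := by
      have hsub : s1 - s2 = ∑ u : Fin k, R i j ω u.succ * (β u - βt u) := by
        rw [hs1def, hs2def, ← Finset.sum_sub_distrib]
        exact Finset.sum_congr rfl fun u _ => by ring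
      rw [hsub]
      calc |∑ u : Fin k, R i j ω u.succ * (β u - βt u)|
          ≤ ∑ u : Fin k, |R i j ω u.succ * (β u - βt u)| := Finset.abs_sum_le_sum_abs _ _
        _ ≤ ∑ _u : Fin k, C * D := by
            refine Finset.sum_le_sum fun u _ => ?_
            rw [abs_mul]
            have hδ : |β u - βt u| ≤ D := by
              have h1 : |β u - βt u| ≤ Real.sqrt (∑ a, (β a - βt a) ^ 2) := by
                rw [← Real.sqrt_sq_eq_abs]
                exact Real.sqrt_le_sqrt (Finset.single_le_sum
                  (f := fun a => (β a - βt a)^2) (fun a _ => sq_nonneg _) (Finset.mem_univ u))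
              linarith
            exact mul_le_mul (hRb u) hδ (abs_nonneg _) hC.le
        _ = (k : ℝ) * (C * D) := by
            rw [Finset.sum_const, Finset.card_univ, Fintype.card_fin, nsmul_eq_mul]
    rw [hv1, hv2]
    calc |(n : ℝ) * (logistic (Real.log (α / n) + s1) * (1 - logistic (Real.log (α / n) + s1)))
          - (n : ℝ) * (logistic (Real.log (αt / n) + s2) *
            (1 - logistic (Real.log (αt / n) + s2)))|
        ≤ Real.exp S * |α - αt| + αbar * Real.exp S * |s1 - s2| :=
          scalar_lip hn1 hα.1 hα.2 hαt.1 hαt.2 hs1S hs2S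
      _ ≤ Real.exp S * D + αbar * Real.exp S * ((k : ℝ) * (C * D)) := by
          have A := mul_le_mul_of_nonneg_left hαD (Real.exp_pos S).le
          have hab : (0:ℝ) ≤ αbar * Real.exp S := by positivity
          have B := mul_le_mul_of_nonneg_left hdiff hab
          calc Real.exp S * |α - αt| + αbar * Real.exp S * |s1 - s2|
              ≤ Real.exp S * D + αbar * Real.exp S * |s1 - s2| := by linarith
            _ ≤ Real.exp S * D + αbar * Real.exp S * ((k : ℝ) * (C * D)) := by
                have : αbar * Real.exp S * |s1 - s2|
                    ≤ αbar * Real.exp S * ((k : ℝ) * (C * D)) := by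
                  calc αbar * Real.exp S * |s1 - s2|
                      = αbar * Real.exp S * |s1 - s2| := rfl
                    _ ≤ αbar * Real.exp S * ((k : ℝ) * (C * D)) := by
                        rw [mul_assoc, mul_assoc]
                        exact mul_le_mul_of_nonneg_left
                          (mul_le_mul_of_nonneg_left hdiff (Real.exp_pos S).le) hαbar.le
                linarith
      _ = K * D := by rw [hKdef]; ring
  -- bound each entry of the matrix difference
  have hRabs : ∀ i ∈ Finset.Icc 1 N, ∀ j ∈ Finset.Icc 1 M, ∀ a, |R i j ω a| ≤ C :=
    fun i _ j _ a => abs_coord_le (hω i j).2 a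
  have hent : ∀ a b : Fin (k + 1),
      |((n : ℝ) • Hess R N M (Fin.cons (Real.log (α / n)) β) ω -
        (n : ℝ) • Hess R N M (Fin.cons (Real.log (αt / n)) βt) ω) a b| ≤ K * D * C^2 := by
    intro a b
    simp only [Matrix.sub_apply, Matrix.smul_apply, smul_eq_mul, Hess, Matrix.of_apply]
    exact entry_lip
      (fun i j => logistic (∑ u, R i j ω u * (Fin.cons (Real.log (α / n)) β : Fin (k+1) → ℝ) u) *
        (1 - logistic (∑ u, R i j ω u * (Fin.cons (Real.log (α / n)) β : Fin (k+1) → ℝ) u)))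
      (fun i j => logistic (∑ u, R i j ω u * (Fin.cons (Real.log (αt / n)) βt : Fin (k+1) → ℝ) u) *
        (1 - logistic (∑ u, R i j ω u * (Fin.cons (Real.log (αt / n)) βt : Fin (k+1) → ℝ) u)))
      (fun i j => R i j ω a) (fun i j => R i j ω b) (n : ℝ) (K * D) C
      (by positivity) hC.le hscal
      (fun i hi j hj => hRabs i hi j hj a) (fun i hi j hj => hRabs i hi j hj b)
  -- conclude via the Frobenius norm
  rw [frobNorm]
  have hsum : (∑ a, ∑ b, (((n : ℝ) • Hess R N M (Fin.cons (Real.log (α / n)) β) ω -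
        (n : ℝ) • Hess R N M (Fin.cons (Real.log (αt / n)) βt) ω) a b) ^ 2)
      ≤ (((k : ℝ) + 1) * (K * D * C^2)) ^ 2 := by
    have h1 : ∀ a b : Fin (k + 1),
        (((n : ℝ) • Hess R N M (Fin.cons (Real.log (α / n)) β) ω -
          (n : ℝ) • Hess R N M (Fin.cons (Real.log (αt / n)) βt) ω) a b) ^ 2
        ≤ (K * D * C^2) ^ 2 := by
      intro a b
      rw [← sq_abs]
      exact pow_le_pow_left₀ (abs_nonneg _) (hent a b) 2
    calc (∑ a, ∑ b, (((n : ℝ) • Hess R N M (Fin.cons (Real.log (α / n)) β) ω -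
          (n : ℝ) • Hess R N M (Fin.cons (Real.log (αt / n)) βt) ω) a b) ^ 2)
        ≤ ∑ _a : Fin (k+1), ∑ _b : Fin (k+1), (K * D * C^2) ^ 2 :=
          Finset.sum_le_sum fun a _ => Finset.sum_le_sum fun b _ => h1 a b
      _ = (((k : ℝ) + 1) * (K * D * C^2)) ^ 2 := by
          simp only [Finset.sum_const, Finset.card_univ, Fintype.card_fin, nsmul_eq_mul]
          push_cast
          ring
  have hnn : 0 ≤ ((k : ℝ) + 1) * (K * D * C^2) :=
    mul_nonneg (by positivity) (mul_nonneg (mul_nonneg hK0 hD0) (sq_nonneg C))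
  calc Real.sqrt (∑ a, ∑ b, (((n : ℝ) • Hess R N M (Fin.cons (Real.log (α / n)) β) ω -
        (n : ℝ) • Hess R N M (Fin.cons (Real.log (αt / n)) βt) ω) a b) ^ 2)
      ≤ Real.sqrt ((((k : ℝ) + 1) * (K * D * C^2)) ^ 2) := Real.sqrt_le_sqrt hsum
    _ = ((k : ℝ) + 1) * (K * D * C^2) := Real.sqrt_sq hnn
    _ = ((k : ℝ) + 1) * (K * C^2) * D := by ring

end SparseNet
end

section
/- Let (W_i)_{i≥1} be i.i.d. random elements, let x be fixed, let z(·, x) be a bounded measurable ℝ^k-valued function, α₀ > 0, β₀ ∈ ℝ^k, and let (N_n) be positive integers with N_n/n → 1 − φ ∈ (0,1). Then the predicted aggregate, Σ_{i=1}^{N_n} e(ln(α₀/n) + z(W_i, x)'β₀), converges in probability to γ₀(x) = (1 − φ) α₀ E[exp(z(W_1, x)'β₀)] as n → ∞. (Total expected sales of a product with attributes x converge to a finite limit under sparse network asymptotics.) -/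
open MeasureTheory ProbabilityTheory Filter
open scoped BigOperators Topology

namespace SparseNet

lemma measurable_logistic : Measurable logistic := by
  have : Continuous logistic := by
    apply Real.continuous_exp.div (continuous_const.add Real.continuous_exp)
    intro v; exact ne_of_gt (add_pos one_pos (Real.exp_pos v))
  exact this.measurable

lemma exp_sub_logistic_nonneg (v : ℝ) : 0 ≤ Real.exp v - logistic v := by
  unfold logistic
  rw [sub_nonneg]
  exact div_le_self (Real.exp_nonneg v) (by linarith [Real.exp_pos v])

lemma exp_sub_logistic_le (v : ℝ) : Real.exp v - logistic v ≤ (Real.exp v) ^ 2 := by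
  unfold logistic
  have h : (0:ℝ) < 1 + Real.exp v := by positivity
  have heq : Real.exp v - Real.exp v / (1 + Real.exp v)
      = (Real.exp v) ^ 2 / (1 + Real.exp v) := by field_simp; ring
  rw [heq]
  exact div_le_self (by positivity) (by linarith [Real.exp_pos v])

/-- the predicted aggregate `Σ_{i=1}^{N_n} e(ln(α₀/n) + z(W_i,x)'β₀)`
converges in probability to `γ₀(x) = (1−φ) α₀ E[exp(z(W_1,x)'β₀)]`.  Here `ζ = z(·, x)`
for the fixed product attribute `x`. -/
theorem statement18
    {Ω 𝒲 : Type} [MeasurableSpace Ω] [MeasurableSpace 𝒲]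
    (μ : Measure Ω) [IsProbabilityMeasure μ]
    (W : ℕ → Ω → 𝒲) (hWmeas : ∀ i, Measurable (W i))
    (hindep : iIndepFun W μ)
    (hident : ∀ i, IdentDistrib (W i) (W 1) μ μ)
    {k : ℕ} (ζ : 𝒲 → Fin k → ℝ) (hζmeas : Measurable ζ)
    (hζbd : ∃ C : ℝ, ∀ w a, |ζ w a| ≤ C)
    (α₀ : ℝ) (hα₀ : 0 < α₀) (β₀ : Fin k → ℝ)
    (φ : ℝ) (hφ : φ ∈ Set.Ioo (0 : ℝ) 1)
    (N : ℕ → ℕ)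
    (hNφ : Tendsto (fun n : ℕ => (N n : ℝ) / n) atTop (𝓝 (1 - φ))) :
    ∀ ε : ℝ, 0 < ε →
      Tendsto (fun n : ℕ =>
          μ {ω | ε ≤ |(∑ i ∈ Finset.Icc 1 (N n),
              logistic (Real.log (α₀ / n) + ∑ a, ζ (W i ω) a * β₀ a)) -
            (1 - φ) * α₀ * ∫ ω', Real.exp (∑ a, ζ (W 1 ω') a * β₀ a) ∂μ|})
        atTop (𝓝 0) := by
  classical
  obtain ⟨C, hC⟩ := hζbd
  have hgmeas : Measurable (fun w => ∑ a, ζ w a * β₀ a) := by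
    apply Finset.measurable_sum
    intro a _
    exact ((measurable_pi_apply a).comp hζmeas).mul measurable_const
  set M : ℝ := ∑ a : Fin k, max C 0 * |β₀ a| with hM_def
  have hgM : ∀ w, |∑ a, ζ w a * β₀ a| ≤ M := by
    intro w
    calc |∑ a, ζ w a * β₀ a| ≤ ∑ a, |ζ w a * β₀ a| := Finset.abs_sum_le_sum_abs _ _
      _ ≤ M := by
        apply Finset.sum_le_sum; intro a _
        rw [abs_mul]
        exact mul_le_mul_of_nonneg_right ((hC w a).trans (le_max_left _ _)) (abs_nonneg _)
  -- The iid sequence for the LLN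
  set X : ℕ → Ω → ℝ := fun i ω => Real.exp (∑ a, ζ (W (1 + i) ω) a * β₀ a) with hX_def
  have hXmeas : ∀ i, Measurable (X i) := fun i =>
    Real.measurable_exp.comp (hgmeas.comp (hWmeas _))
  have hXbd : ∀ i ω, ‖X i ω‖ ≤ Real.exp M := by
    intro i ω
    rw [Real.norm_eq_abs, abs_of_pos (Real.exp_pos _)]
    exact Real.exp_le_exp.2 ((le_abs_self _).trans (hgM _))
  have hXint : Integrable (X 0) μ := by
    apply (integrable_const (Real.exp M)).mono' (hXmeas 0).aestronglyMeasurable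
    exact ae_of_all _ fun ω => hXbd 0 ω
  have hem : Measurable (fun w => Real.exp (∑ a, ζ w a * β₀ a)) :=
    Real.measurable_exp.comp hgmeas
  have hXindep : Pairwise (Function.onFun (IndepFun · · μ) X) := by
    intro i j hij
    exact (hindep.indepFun (show 1 + i ≠ 1 + j by omega)).comp hem hem
  have hXident : ∀ i, IdentDistrib (X i) (X 0) μ μ := by
    intro i
    have h1 : IdentDistrib (W (1 + i)) (W (1 + 0)) μ μ :=
      (hident (1 + i)).trans (hident (1 + 0)).symm
    exact h1.comp hem
  have hlln := strong_law_ae_real X hXint hXindep hXident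
  have hE : μ[X 0] = ∫ ω', Real.exp (∑ a, ζ (W 1 ω') a * β₀ a) ∂μ := rfl
  -- facts about N
  have hφ0 : (0:ℝ) < 1 - φ := by linarith [hφ.2]
  have hNtop : Tendsto N atTop atTop := by
    have h1 : Tendsto (fun n : ℕ => ((N n : ℝ) / n) * n) atTop atTop :=
      Tendsto.pos_mul_atTop hφ0 hNφ tendsto_natCast_atTop_atTop
    have h2 : Tendsto (fun n : ℕ => (N n : ℝ)) atTop atTop := by
      apply h1.congr'
      filter_upwards [eventually_ge_atTop 1] with n hn
      have : (n:ℝ) ≠ 0 := by positivity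
      field_simp
    exact tendsto_natCast_atTop_iff.mp h2
  have hbd : Tendsto (fun n : ℕ => ((N n : ℝ) / n) * ((α₀ * Real.exp M) ^ 2 / n))
      atTop (𝓝 0) := by
    have := hNφ.mul (tendsto_const_div_atTop_nhds_zero_nat ((α₀ * Real.exp M) ^ 2))
    simpa using this
  -- a.e. pointwise convergence
  have key : ∀ᵐ ω ∂μ, Tendsto (fun n : ℕ => ∑ i ∈ Finset.Icc 1 (N n),
      logistic (Real.log (α₀ / n) + ∑ a, ζ (W i ω) a * β₀ a)) atTop
      (𝓝 ((1 - φ) * α₀ * ∫ ω', Real.exp (∑ a, ζ (W 1 ω') a * β₀ a) ∂μ)) := by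
    filter_upwards [hlln] with ω hω
    have hS' : Tendsto (fun n : ℕ => α₀ * ((∑ i ∈ Finset.range (N n), X i ω) / n)) atTop
        (𝓝 (α₀ * (μ[X 0] * (1 - φ)))) := by
      apply Tendsto.const_mul
      have h1 : Tendsto (fun n : ℕ =>
          ((∑ i ∈ Finset.range (N n), X i ω) / (N n)) * ((N n : ℝ) / n))
          atTop (𝓝 (μ[X 0] * (1 - φ))) := (hω.comp hNtop).mul hNφ
      apply h1.congr
      intro n
      rcases eq_or_ne (N n) 0 with h | h
      · simp [h]
      · have hc : ((N n : ℝ)) ≠ 0 := Nat.cast_ne_zero.2 h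
        field_simp
    have hdiff : ∀ᶠ n in atTop,
        |(∑ i ∈ Finset.Icc 1 (N n),
            logistic (Real.log (α₀ / n) + ∑ a, ζ (W i ω) a * β₀ a)) -
          α₀ * ((∑ i ∈ Finset.range (N n), X i ω) / n)|
        ≤ ((N n : ℝ) / n) * ((α₀ * Real.exp M) ^ 2 / n) := by
      filter_upwards [eventually_ge_atTop 1] with n hn
      have hn0 : (0:ℝ) < n := by exact_mod_cast hn
      have hp : (0:ℝ) < α₀ / n := by positivity
      have hsum : α₀ * ((∑ i ∈ Finset.range (N n), X i ω) / n)
          = ∑ i ∈ Finset.Icc 1 (N n), (α₀ / n) * Real.exp (∑ a, ζ (W i ω) a * β₀ a) := by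
        rw [← Finset.Ico_add_one_right_eq_Icc, Finset.sum_Ico_eq_sum_range, Nat.add_sub_cancel,
          ← Finset.mul_sum]
        simp only [hX_def]
        ring
      rw [hsum, ← Finset.sum_sub_distrib]
      have hterm : ∀ i ∈ Finset.Icc 1 (N n),
          |logistic (Real.log (α₀ / n) + ∑ a, ζ (W i ω) a * β₀ a) -
            (α₀ / n) * Real.exp (∑ a, ζ (W i ω) a * β₀ a)|
          ≤ (α₀ * Real.exp M) ^ 2 / n ^ 2 := by
        intro i _
        set v : ℝ := Real.log (α₀ / n) + ∑ a, ζ (W i ω) a * β₀ a with hv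
        have hev : Real.exp v = (α₀ / n) * Real.exp (∑ a, ζ (W i ω) a * β₀ a) := by
          rw [hv, Real.exp_add, Real.exp_log hp]
        rw [abs_sub_comm, ← hev, abs_of_nonneg (exp_sub_logistic_nonneg v)]
        calc Real.exp v - logistic v ≤ (Real.exp v) ^ 2 := exp_sub_logistic_le v
          _ ≤ (α₀ * Real.exp M) ^ 2 / n ^ 2 := by
            rw [hev]
            have h1 : Real.exp (∑ a, ζ (W i ω) a * β₀ a) ≤ Real.exp M :=
              Real.exp_le_exp.2 ((le_abs_self _).trans (hgM _))
            have h2 : (α₀ / n) * Real.exp (∑ a, ζ (W i ω) a * β₀ a)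
                ≤ (α₀ / n) * Real.exp M := by
              apply mul_le_mul_of_nonneg_left h1 (le_of_lt hp)
            calc ((α₀ / n) * Real.exp (∑ a, ζ (W i ω) a * β₀ a)) ^ 2
                ≤ ((α₀ / n) * Real.exp M) ^ 2 := by
                  apply sq_le_sq'
                  · nlinarith [Real.exp_pos (∑ a, ζ (W i ω) a * β₀ a), Real.exp_pos M]
                  · exact h2
              _ = (α₀ * Real.exp M) ^ 2 / n ^ 2 := by field_simp
      calc |∑ i ∈ Finset.Icc 1 (N n),
            (logistic (Real.log (α₀ / n) + ∑ a, ζ (W i ω) a * β₀ a) -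
              (α₀ / n) * Real.exp (∑ a, ζ (W i ω) a * β₀ a))|
          ≤ ∑ i ∈ Finset.Icc 1 (N n),
            |logistic (Real.log (α₀ / n) + ∑ a, ζ (W i ω) a * β₀ a) -
              (α₀ / n) * Real.exp (∑ a, ζ (W i ω) a * β₀ a)| :=
            Finset.abs_sum_le_sum_abs _ _
        _ ≤ ∑ _i ∈ Finset.Icc 1 (N n), (α₀ * Real.exp M) ^ 2 / n ^ 2 :=
            Finset.sum_le_sum hterm
        _ = (N n : ℝ) * ((α₀ * Real.exp M) ^ 2 / n ^ 2) := by
            rw [Finset.sum_const, Nat.card_Icc]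
            simp [nsmul_eq_mul]
        _ = ((N n : ℝ) / n) * ((α₀ * Real.exp M) ^ 2 / n) := by
            rw [pow_two]
            ring
    have hzero : Tendsto (fun n : ℕ =>
        (∑ i ∈ Finset.Icc 1 (N n),
          logistic (Real.log (α₀ / n) + ∑ a, ζ (W i ω) a * β₀ a)) -
        α₀ * ((∑ i ∈ Finset.range (N n), X i ω) / n)) atTop (𝓝 0) := by
      rw [tendsto_zero_iff_abs_tendsto_zero]
      exact squeeze_zero' (Eventually.of_forall fun n => abs_nonneg _) hdiff hbd
    have hfin := hS'.add hzero
    have heq : ∀ n : ℕ,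
        α₀ * ((∑ i ∈ Finset.range (N n), X i ω) / n) +
          ((∑ i ∈ Finset.Icc 1 (N n),
            logistic (Real.log (α₀ / n) + ∑ a, ζ (W i ω) a * β₀ a)) -
          α₀ * ((∑ i ∈ Finset.range (N n), X i ω) / n))
        = ∑ i ∈ Finset.Icc 1 (N n),
            logistic (Real.log (α₀ / n) + ∑ a, ζ (W i ω) a * β₀ a) := by
      intro n; ring
    have := hfin.congr heq
    rw [add_zero, hE] at this
    convert this using 2
    ring
  -- convert a.e. convergence to convergence in measure
  intro ε hε
  have hfmeas : ∀ n : ℕ, AEStronglyMeasurable (fun ω => ∑ i ∈ Finset.Icc 1 (N n),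
      logistic (Real.log (α₀ / n) + ∑ a, ζ (W i ω) a * β₀ a)) μ := by
    intro n
    apply Measurable.aestronglyMeasurable
    apply Finset.measurable_sum
    intro i _
    exact measurable_logistic.comp (measurable_const.add (hgmeas.comp (hWmeas i)))
  have h := tendstoInMeasure_iff_dist.mp (tendstoInMeasure_of_tendsto_ae hfmeas key) ε hε
  simpa [Real.dist_eq] using h

end SparseNet
end
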